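/- For every natural number n and every x ∈ ℝ, the physicists' Hermite polynomial H_n satisfies H_n''(x)·H_n(x) ≤ H_n'(x)² + H_n(x)². Equivalently, in terms of the probabilists' Hermite polynomials He_n (via H_n(x) = 2^{n/2}·He_n(√2·x)): 2·He_n''(y)·He_n(y) ≤ 2·He_n'(y)² + He_n(y)² for all y ∈ ℝ. Consequently the Fock-state wavefunctions ψ_n(x) = N_n e^{−x²/2} H_n(x) have log-concave amplitude wherever H_n ≠ 0, so Fock states do not violate the objective-realism inequality. -/

import Mathlib

/-- The probabilists' Hermite polynomial `He_n` evaluated at a real point. -/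
noncomputable def He (n : ℕ) (y : ℝ) : ℝ := Polynomial.aeval y (Polynomial.hermite n)

/-- The physicists' Hermite polynomial `H_n(x) = 2^{n/2}·He_n(√2·x)`. -/
noncomputable def Hphys (n : ℕ) (x : ℝ) : ℝ := 2 ^ ((n : ℝ) / 2) * He n (Real.sqrt 2 * x)

open Polynomial in
theorem deriv_hermite : ∀ n : ℕ,
    derivative (hermite (n + 1)) = ((n : ℤ[X]) + 1) * hermite n
  | 0 => by simp [hermite_one]
  | n + 1 => by
    have ih := deriv_hermite n
    have h0 : derivative (hermite n) = X * hermite n - hermite (n + 1) := by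
      rw [hermite_succ]; ring
    rw [hermite_succ (n + 1), derivative_sub, derivative_mul, derivative_X, ih,
      show derivative (((n : ℤ[X]) + 1) * hermite n)
          = ((n : ℤ[X]) + 1) * derivative (hermite n) by
        rw [derivative_mul]; simp, h0]
    push_cast
    ring

theorem He_fun_eq (n : ℕ) :
    He n = fun y => Polynomial.aeval y (Polynomial.hermite n) := rfl

theorem He_zero_eq (y : ℝ) : He 0 y = 1 := by simp [He]

theorem He_one_eq (y : ℝ) : He 1 y = y := by simp [He, Polynomial.hermite_one]

theorem He_rec (n : ℕ) (y : ℝ) :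
    He (n + 2) y = y * He (n + 1) y - ((n : ℝ) + 1) * He n y := by
  simp only [He, Polynomial.hermite_succ (n + 1), deriv_hermite n, map_sub, map_mul,
    Polynomial.aeval_X, map_add, map_natCast, map_one]

theorem He_differentiable (n : ℕ) : Differentiable ℝ (He n) := by
  rw [He_fun_eq]
  exact Polynomial.differentiable_aeval _

theorem He_deriv (n : ℕ) :
    deriv (He (n + 1)) = fun y => ((n : ℝ) + 1) * He n y := by
  rw [He_fun_eq (n + 1)]
  funext y
  rw [Polynomial.deriv_aeval, deriv_hermite n]
  simp [He]

theorem turan (n : ℕ) (y : ℝ) :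
    0 ≤ He (n + 1) y ^ 2 - He (n + 2) y * He n y := by
  induction n with
  | zero =>
    have h2 := He_rec 0 y
    rw [He_zero_eq, He_one_eq] at *
    nlinarith [h2]
  | succ m ih =>
    have key : He (m + 2) y ^ 2 - He (m + 3) y * He (m + 1) y
        = ((m : ℝ) + 1) * (He (m + 1) y ^ 2 - He (m + 2) y * He m y) + He (m + 1) y ^ 2 := by
      rw [He_rec (m + 1) y, He_rec m y]; push_cast; ring
    have hm : (0 : ℝ) ≤ (m : ℝ) + 1 := by positivity
    nlinarith [mul_nonneg hm ih, sq_nonneg (He (m + 1) y)]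

theorem He_ineq (n : ℕ) (y : ℝ) :
    2 * (deriv (deriv (He n)) y * He n y) ≤ 2 * (deriv (He n) y) ^ 2 + (He n y) ^ 2 := by
  match n with
  | 0 =>
    have h0 : He 0 = fun _ => (1 : ℝ) := funext He_zero_eq
    rw [h0]
    norm_num
  | 1 =>
    have h1 : deriv (He 1) = fun _ => (1 : ℝ) := by
      rw [He_deriv 0]; funext z; rw [He_zero_eq]; norm_num
    rw [h1]
    norm_num
    nlinarith [sq_nonneg (He 1 y)]
  | (m + 2) =>
    have h1 : deriv (He (m + 2)) = fun y => ((m : ℝ) + 2) * He (m + 1) y := by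
      rw [He_deriv (m + 1)]; funext z; push_cast; ring
    have h1y : deriv (He (m + 2)) y = ((m : ℝ) + 2) * He (m + 1) y := by rw [h1]
    have h2 : deriv (deriv (He (m + 2))) y
        = ((m : ℝ) + 2) * (((m : ℝ) + 1) * He m y) := by
      rw [h1, deriv_const_mul _ ((He_differentiable (m + 1)) y),
        show deriv (He (m + 1)) = fun y => ((m : ℝ) + 1) * He m y from He_deriv m]
    rw [h2, h1y]
    have ht := turan m y
    have hc : (0 : ℝ) ≤ 2 * ((m : ℝ) + 2) * ((m : ℝ) + 1) := by positivity
    nlinarith [mul_nonneg hc ht, mul_nonneg (show (0:ℝ) ≤ 2 * ((m:ℝ)+2) by positivity)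
      (sq_nonneg (He (m + 1) y))]

theorem deriv_scale (f : ℝ → ℝ) (hf : Differentiable ℝ f) (c : ℝ) (z : ℝ) :
    deriv (fun x => f (c * x)) z = c * deriv f (c * z) := by
  have h : (fun x => f (c * x)) = f ∘ (fun x => c * x) := rfl
  have hd : Differentiable ℝ (fun x : ℝ => c * x) := by
    simpa using (differentiable_id.const_mul c)
  rw [h, deriv_comp z (hf _) (hd z)]
  have : deriv (fun x : ℝ => c * x) z = c := by
    rw [deriv_const_mul _ differentiableAt_fun_id]
    simp
  rw [this]
  ring

/-- For every `n` and `x`, `H_n''(x)·H_n(x) ≤ H_n'(x)² + H_n(x)²`; equivalently, in terms of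
the probabilists' Hermite polynomials, `2·He_n''(y)·He_n(y) ≤ 2·He_n'(y)² + He_n(y)²`.
Hence the Fock-state amplitudes are log-concave wherever `H_n ≠ 0`. -/
theorem stmt_18 :
    (∀ (n : ℕ) (x : ℝ),
      deriv (deriv (Hphys n)) x * Hphys n x ≤ (deriv (Hphys n) x) ^ 2 + (Hphys n x) ^ 2) ∧
    (∀ (n : ℕ) (y : ℝ),
      2 * (deriv (deriv (He n)) y * He n y) ≤ 2 * (deriv (He n) y) ^ 2 + (He n y) ^ 2) := by
  constructor
  · intro n x
    set c : ℝ := 2 ^ ((n : ℝ) / 2) with hc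
    have hcpos : 0 < c := by positivity
    have hdiff : Differentiable ℝ (He n) := He_differentiable n
    have hdiff' : Differentiable ℝ (deriv (He n)) := by
      have h : deriv (He n) = fun y =>
          Polynomial.aeval y (Polynomial.derivative (Polynomial.hermite n)) := by
        funext y; rw [He_fun_eq]; exact Polynomial.deriv_aeval _
      rw [h]
      exact Polynomial.differentiable_aeval _
    have hs2 : Real.sqrt 2 * Real.sqrt 2 = 2 :=
      Real.mul_self_sqrt (by norm_num)
    -- first derivative
    have hd1 : deriv (Hphys n) = fun z =>
        (c * Real.sqrt 2) * deriv (He n) (Real.sqrt 2 * z) := by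
      funext z
      have hH : Hphys n = fun x => c * He n (Real.sqrt 2 * x) := rfl
      have hdc : Differentiable ℝ (fun x : ℝ => He n (Real.sqrt 2 * x)) := by
        have : (fun x : ℝ => He n (Real.sqrt 2 * x))
            = (He n) ∘ (fun x : ℝ => Real.sqrt 2 * x) := rfl
        rw [this]
        exact hdiff.comp (by simpa using (differentiable_id.const_mul (Real.sqrt 2)))
      rw [hH, deriv_const_mul _ (hdc z), deriv_scale (He n) hdiff (Real.sqrt 2) z]
      ring
    -- second derivative
    have hd2 : deriv (deriv (Hphys n)) x
        = (c * 2) * deriv (deriv (He n)) (Real.sqrt 2 * x) := by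
      rw [hd1]
      have hdc : Differentiable ℝ (fun z : ℝ => deriv (He n) (Real.sqrt 2 * z)) := by
        have : (fun z : ℝ => deriv (He n) (Real.sqrt 2 * z))
            = (deriv (He n)) ∘ (fun z : ℝ => Real.sqrt 2 * z) := rfl
        rw [this]
        exact hdiff'.comp (by simpa using (differentiable_id.const_mul (Real.sqrt 2)))
      rw [show (fun z : ℝ => (c * Real.sqrt 2) * deriv (He n) (Real.sqrt 2 * z))
            = fun z : ℝ => (c * Real.sqrt 2) * ((fun z => deriv (He n) (Real.sqrt 2 * z)) z)
          from rfl,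
        deriv_const_mul _ (hdc x), deriv_scale (deriv (He n)) hdiff' (Real.sqrt 2) x]
      rw [show c * Real.sqrt 2 * (Real.sqrt 2 * deriv (deriv (He n)) (Real.sqrt 2 * x))
            = (Real.sqrt 2 * Real.sqrt 2) * (c * deriv (deriv (He n)) (Real.sqrt 2 * x))
          from by ring, hs2]
      ring
    set y := Real.sqrt 2 * x with hy
    have hd1x : deriv (Hphys n) x = (c * Real.sqrt 2) * deriv (He n) y := by rw [hd1]
    have e1 : (deriv (Hphys n) x) ^ 2 = c ^ 2 * (2 * (deriv (He n) y) ^ 2) := by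
      rw [hd1x]
      have : (c * Real.sqrt 2) ^ 2 = c ^ 2 * 2 := by
        rw [mul_pow, Real.sq_sqrt (by norm_num : (0:ℝ) ≤ 2)]
      rw [mul_pow, this]
      ring
    have hH' : Hphys n x = c * He n y := rfl
    have hkey := He_ineq n y
    rw [hd2, e1, hH']
    have hc2 : (0 : ℝ) ≤ c ^ 2 := by positivity
    nlinarith [mul_le_mul_of_nonneg_left hkey hc2]
  · exact He_ineq
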